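/- Let G be a finite-dimensional non-abelian nilpotent Lie superalgebra. Then SDer_z(G) is abelian if and only if G is a stem Lie superalgebra, i.e., Z(G) ⊆ G¹. -/

import Mathlib

/-- A Lie superalgebra: a `ZMod 2`-graded vector space with a bilinear bracket that
respects the grading, is super skew-symmetric and satisfies the super Jacobi identity. -/
structure LieSuperAlg (K : Type*) [Field K] (L : Type*) [AddCommGroup L] [Module K L] where
  br : L →ₗ[K] L →ₗ[K] L
  grading : ZMod 2 → Submodule K L
  internal : DirectSum.IsInternal grading
  br_grade : ∀ (i j : ZMod 2), ∀ x ∈ grading i, ∀ y ∈ grading j, br x y ∈ grading (i + j)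
  skew : ∀ (i j : ZMod 2), ∀ x ∈ grading i, ∀ y ∈ grading j,
    br x y = -(((-1 : K) ^ (i.val * j.val)) • br y x)
  jacobi : ∀ (i j : ZMod 2), ∀ x ∈ grading i, ∀ y ∈ grading j, ∀ z : L,
    br x (br y z) = br (br x y) z + ((-1 : K) ^ (i.val * j.val)) • br y (br x z)

variable {K : Type*} [Field K] {L : Type*} {M : Type*} [AddCommGroup L] [Module K L]
  [AddCommGroup M] [Module K M]

/-- The center `Z(G)`. -/
def LieSuperAlg.center (S : LieSuperAlg K L) : Submodule K L where
  carrier := {x | ∀ g : L, S.br g x = 0}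
  add_mem' := by intro a b ha hb g; rw [map_add, ha g, hb g, add_zero]
  zero_mem' := by intro g; simp
  smul_mem' := by intro c a ha g; rw [map_smul, ha g, smul_zero]

/-- The derived subalgebra `G¹ = [G,G]`. -/
def LieSuperAlg.derived (S : LieSuperAlg K L) : Submodule K L :=
  Submodule.span K {z | ∃ x y : L, S.br x y = z}

/-- The lower central series `G⁰ = G`, `Gⁿ⁺¹ = [Gⁿ, G]`. -/
def LieSuperAlg.lcs (S : LieSuperAlg K L) : ℕ → Submodule K L
  | 0 => ⊤
  | n + 1 => Submodule.span K {z | ∃ x ∈ S.lcs n, ∃ y : L, S.br x y = z}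

/-- A superderivation of degree `α`. -/
def LieSuperAlg.IsSuperDer (S : LieSuperAlg K L) (α : ZMod 2) (T : L →ₗ[K] L) : Prop :=
  (∀ (i : ZMod 2), ∀ x ∈ S.grading i, T x ∈ S.grading (i + α)) ∧
  (∀ (i : ZMod 2), ∀ x ∈ S.grading i, ∀ y : L,
    T (S.br x y) = S.br (T x) y + ((-1 : K) ^ (α.val * i.val)) • S.br x (T y))

/-- A central derivation: a superderivation with image in the center. -/
def LieSuperAlg.IsCentralDer (S : LieSuperAlg K L) (α : ZMod 2) (T : L →ₗ[K] L) : Prop :=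
  S.IsSuperDer α T ∧ ∀ x : L, T x ∈ S.center

/-- The superbracket of two (homogeneous, of degrees `α`, `β`) linear endomorphisms. -/
def sbr (α β : ZMod 2) (T₁ T₂ : L →ₗ[K] L) : L →ₗ[K] L :=
  T₁ ∘ₗ T₂ - ((-1 : K) ^ (α.val * β.val)) • (T₂ ∘ₗ T₁)

lemma br_mem_derived (S : LieSuperAlg K L) (x y : L) : S.br x y ∈ S.derived :=
  Submodule.subset_span ⟨x, y, rfl⟩

lemma zmod2_cases (i d : ZMod 2) : i = d ∨ i = d + 1 := by revert i d; decide

lemma zmod2_add (d e : ZMod 2) : d + (e + d) = e := by revert d e; decide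

lemma LieSuperAlg.mem_center_iff (S : LieSuperAlg K L) {x : L} :
    x ∈ S.center ↔ ∀ g : L, S.br g x = 0 := Iff.rfl

lemma LieSuperAlg.grading_disjoint (S : LieSuperAlg K L) (d : ZMod 2) :
    Disjoint (S.grading d) (S.grading (d + 1)) := by
  have h := (iSupIndep_def.mp S.internal.submodule_iSupIndep) d
  refine h.mono_right ?_
  exact le_iSup₂_of_le (d + 1) (by simp) le_rfl

lemma LieSuperAlg.add_eq_zero' (S : LieSuperAlg K L) {d : ZMod 2} {a b : L}
    (ha : a ∈ S.grading d) (hb : b ∈ S.grading (d + 1)) (h : a + b = 0) :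
    a = 0 ∧ b = 0 := by
  have hab : a = -b := eq_neg_of_add_eq_zero_left h
  have ha' : a ∈ S.grading (d + 1) := hab ▸ neg_mem hb
  have : a = 0 := (Submodule.disjoint_def.mp (S.grading_disjoint d)) a ha ha'
  exact ⟨this, by rw [this] at h; simpa using h⟩

lemma LieSuperAlg.decomp (S : LieSuperAlg K L) (d : ZMod 2) (x : L) :
    ∃ a ∈ S.grading d, ∃ b ∈ S.grading (d + 1), x = a + b := by
  have htop : iSup S.grading = ⊤ := S.internal.submodule_iSup_eq_top
  have hle : iSup S.grading ≤ S.grading d ⊔ S.grading (d + 1) := by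
    refine iSup_le fun j => ?_
    rcases zmod2_cases j d with rfl | rfl
    · exact le_sup_left
    · exact le_sup_right
  have hx : x ∈ S.grading d ⊔ S.grading (d + 1) := hle (htop ▸ Submodule.mem_top)
  rcases Submodule.mem_sup.mp hx with ⟨a, ha, b, hb, hab⟩
  exact ⟨a, ha, b, hb, hab.symm⟩

/-- Components of a central element are central. -/
lemma LieSuperAlg.center_comp (S : LieSuperAlg K L) {d : ZMod 2} {z a b : L}
    (hz : z ∈ S.center) (ha : a ∈ S.grading d) (hb : b ∈ S.grading (d + 1))
    (hab : z = a + b) : a ∈ S.center ∧ b ∈ S.center := by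
  have key : ∀ g : L, S.br g a = 0 ∧ S.br g b = 0 := by
    have hhom : ∀ (j : ZMod 2), ∀ g ∈ S.grading j, S.br g a = 0 ∧ S.br g b = 0 := by
      intro j g hg
      have h0 : S.br g a + S.br g b = 0 := by
        rw [← map_add, ← hab]; exact hz g
      have hbb := S.br_grade j (d + 1) g hg b hb
      rw [← add_assoc] at hbb
      exact S.add_eq_zero' (S.br_grade j d g hg a ha) hbb h0
    intro g
    rcases S.decomp 0 g with ⟨g0, hg0, g1, hg1, rfl⟩
    have h0 := hhom 0 g0 hg0
    have h1 := hhom (0 + 1) g1 hg1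
    constructor <;> rw [map_add, LinearMap.add_apply]
    · rw [h0.1, h1.1, add_zero]
    · rw [h0.2, h1.2, add_zero]
  exact ⟨fun g => (key g).1, fun g => (key g).2⟩

/-- A homogeneous element with zero right-brackets has zero left-brackets. -/
lemma LieSuperAlg.hom_br_left_zero (S : LieSuperAlg K L) {i : ZMod 2} {z : L}
    (hzg : z ∈ S.grading i) (hz : ∀ g : L, S.br g z = 0) (y : L) : S.br z y = 0 := by
  rcases S.decomp 0 y with ⟨a, ha, b, hb, rfl⟩
  rw [map_add]
  rw [S.skew i 0 z hzg a ha, S.skew i (0 + 1) z hzg b hb, hz a, hz b]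
  simp

/-- Central elements have zero left-brackets. -/
lemma LieSuperAlg.center_br (S : LieSuperAlg K L) {z : L} (hz : z ∈ S.center) (y : L) :
    S.br z y = 0 := by
  rcases S.decomp 0 z with ⟨a, ha, b, hb, hab⟩
  obtain ⟨hac, hbc⟩ := S.center_comp hz ha hb hab
  rw [hab, map_add, LinearMap.add_apply, S.hom_br_left_zero ha hac y,
    S.hom_br_left_zero hb hbc y, add_zero]

/-- An element with zero left-brackets is central. -/
lemma LieSuperAlg.mem_center_of_br_left_zero (S : LieSuperAlg K L) {x : L}
    (hx : ∀ y : L, S.br x y = 0) : x ∈ S.center := by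
  rcases S.decomp 0 x with ⟨a, ha, b, hb, hab⟩
  have key : ∀ (j : ZMod 2), ∀ g ∈ S.grading j, S.br a g = 0 ∧ S.br b g = 0 := by
    intro j g hg
    have h0 : S.br a g + S.br b g = 0 := by
      have := hx g
      rw [hab, map_add, LinearMap.add_apply] at this
      exact this
    have h1 : (0 : ZMod 2) + 1 + j = 0 + j + 1 := by ring
    exact S.add_eq_zero' (S.br_grade 0 j a ha g hg)
      (h1 ▸ S.br_grade (0+1) j b hb g hg) h0
  intro g
  rcases S.decomp 0 g with ⟨g0, hg0, g1, hg1, rfl⟩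
  have hga : ∀ (j : ZMod 2), ∀ u ∈ S.grading j, S.br u a = 0 ∧ S.br u b = 0 := by
    intro j u hu
    constructor
    · rw [S.skew j 0 u hu a ha, (key j u hu).1]; simp
    · rw [S.skew j (0+1) u hu b hb, (key j u hu).2]; simp
  rw [hab, map_add, map_add, LinearMap.add_apply, LinearMap.add_apply,
    (hga 0 g0 hg0).1, (hga 0 g0 hg0).2, (hga (0+1) g1 hg1).1, (hga (0+1) g1 hg1).2]
  simp

/-- The derived subalgebra is graded. -/
lemma LieSuperAlg.derived_decomp (S : LieSuperAlg K L) (d : ZMod 2) {c : L} (hc : c ∈ S.derived) :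
    ∃ a ∈ S.derived ⊓ S.grading d, ∃ b ∈ S.derived ⊓ S.grading (d + 1), c = a + b := by
  set D := (S.derived ⊓ S.grading d) ⊔ (S.derived ⊓ S.grading (d + 1)) with hD
  have hle : S.derived ≤ D := by
    rw [LieSuperAlg.derived]
    refine Submodule.span_le.mpr ?_
    rintro _ ⟨x, y, rfl⟩
    rcases S.decomp 0 x with ⟨x0, hx0, x1, hx1, rfl⟩
    rcases S.decomp 0 y with ⟨y0, hy0, y1, hy1, rfl⟩
    have mem : ∀ (i j : ZMod 2), ∀ u ∈ S.grading i, ∀ v ∈ S.grading j, S.br u v ∈ D := by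
      intro i j u hu v hv
      have h1 : S.br u v ∈ S.derived := br_mem_derived S u v
      have h2 : S.br u v ∈ S.grading (i + j) := S.br_grade i j u hu v hv
      rcases zmod2_cases (i + j) d with he | he
      · exact le_sup_left (α := Submodule K L) (Submodule.mem_inf.mpr ⟨h1, he ▸ h2⟩)
      · exact le_sup_right (α := Submodule K L) (Submodule.mem_inf.mpr ⟨h1, he ▸ h2⟩)
    have expand : S.br (x0 + x1) (y0 + y1) = S.br x0 y0 + S.br x0 y1 + S.br x1 y0 + S.br x1 y1 := by
      simp [map_add]; abel
    rw [SetLike.mem_coe, expand]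
    exact add_mem (add_mem (add_mem (mem 0 0 x0 hx0 y0 hy0) (mem 0 (0+1) x0 hx0 y1 hy1))
      (mem (0+1) 0 x1 hx1 y0 hy0)) (mem (0+1) (0+1) x1 hx1 y1 hy1)
  rcases Submodule.mem_sup.mp (hle hc) with ⟨a, ha, b, hb, hab⟩
  exact ⟨a, ha, b, hb, hab.symm⟩

lemma LieSuperAlg.lcs_one (S : LieSuperAlg K L) : S.lcs 1 = S.derived := by
  show Submodule.span K {z | ∃ x ∈ S.lcs 0, ∃ y : L, S.br x y = z} = _
  rw [LieSuperAlg.derived]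
  congr 1
  ext z
  simp [LieSuperAlg.lcs]

lemma LieSuperAlg.lcs_succ_le_derived (S : LieSuperAlg K L) (n : ℕ) : S.lcs (n + 1) ≤ S.derived := by
  show Submodule.span K {z | ∃ x ∈ S.lcs n, ∃ y : L, S.br x y = z} ≤ _
  refine Submodule.span_le.mpr ?_
  rintro _ ⟨x, _, y, rfl⟩
  exact br_mem_derived S x y

/-- Central derivations vanish on the derived subalgebra. -/
lemma LieSuperAlg.cder_vanish (S : LieSuperAlg K L) {α : ZMod 2} {T : L →ₗ[K] L}
    (hT : S.IsCentralDer α T) : ∀ w ∈ S.derived, T w = 0 := by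
  intro w hw
  induction hw using Submodule.span_induction with
  | mem x hx =>
    obtain ⟨u, v, rfl⟩ := hx
    rcases S.decomp 0 u with ⟨u0, hu0, u1, hu1, rfl⟩
    have hz : ∀ (i : ZMod 2), ∀ a ∈ S.grading i, T (S.br a v) = 0 := by
      intro i a ha
      rw [hT.1.2 i a ha v, S.center_br (hT.2 a) v, hT.2 v a]
      simp
    rw [map_add, LinearMap.add_apply, map_add, hz 0 u0 hu0, hz (0+1) u1 hu1, add_zero]
  | zero => exact map_zero T
  | add x y _ _ hx hy => rw [map_add, hx, hy, add_zero]
  | smul a x _ hx => rw [map_smul, hx, smul_zero]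

/-- An isoclinism `(φ, θ)` between two Lie superalgebras. -/
structure Isoclinism (SG : LieSuperAlg K L) (SH : LieSuperAlg K M) where
  φ : (L ⧸ SG.center) ≃ₗ[K] (M ⧸ SH.center)
  θ : SG.derived ≃ₗ[K] SH.derived
  φ_grade : ∀ (i : ZMod 2), ∀ x ∈ SG.grading i, ∃ h ∈ SH.grading i,
    φ (Submodule.Quotient.mk x) = Submodule.Quotient.mk h
  θ_grade : ∀ (i : ZMod 2), ∀ (x : L) (hx : x ∈ SG.derived), x ∈ SG.grading i →
    (θ ⟨x, hx⟩ : M) ∈ SH.grading i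
  compat : ∀ (x y : L) (h k : M),
    φ (Submodule.Quotient.mk x) = Submodule.Quotient.mk h →
    φ (Submodule.Quotient.mk y) = Submodule.Quotient.mk k →
    (θ ⟨SG.br x y, br_mem_derived SG x y⟩ : M) = SH.br h k

/-- For a finite-dimensional non-abelian nilpotent Lie superalgebra `G`,
`SDer_z(G)` is abelian iff `G` is stem. -/
theorem stmt4 (S : LieSuperAlg K L) [Module.Finite K L]
    (hnil : ∃ n, S.lcs n = ⊥) (hnab : S.derived ≠ ⊥) :
    (∀ (α β : ZMod 2) (T₁ T₂ : L →ₗ[K] L), S.IsCentralDer α T₁ → S.IsCentralDer β T₂ →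
      sbr α β T₁ T₂ = 0) ↔ S.center ≤ S.derived := by
  constructor
  · intro h
    by_contra hc
    rw [SetLike.not_le_iff_exists] at hc
    obtain ⟨z', hz'c, hz'd⟩ := hc
    -- find a homogeneous central element not in the derived subalgebra
    obtain ⟨z0, hz0, z1, hz1, hzdec⟩ := S.decomp 0 z'
    obtain ⟨hz0c, hz1c⟩ := S.center_comp hz'c hz0 hz1 hzdec
    have hzex : ∃ d : ZMod 2, ∃ z : L, z ∈ S.center ∧ z ∈ S.grading d ∧ z ∉ S.derived := by
      by_cases h0 : z0 ∈ S.derived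
      · refine ⟨0 + 1, z1, hz1c, hz1, fun hmem => hz'd ?_⟩
        rw [hzdec]; exact add_mem h0 hmem
      · exact ⟨0, z0, hz0c, hz0, h0⟩
    obtain ⟨d, z, hzc, hzg, hzd⟩ := hzex
    -- find a nonzero homogeneous element of the last nonzero lcs term
    classical
    have hbot : S.lcs (Nat.find hnil) = ⊥ := Nat.find_spec hnil
    have hne0 : Nat.find hnil ≠ 0 := by
      intro hfe
      rw [hfe] at hbot
      have : (⊤ : Submodule K L) = ⊥ := hbot
      apply hnab
      rw [← le_bot_iff, ← this]
      exact le_top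
    have hne1 : Nat.find hnil ≠ 1 := by
      intro hfe
      rw [hfe, S.lcs_one] at hbot
      exact hnab hbot
    obtain ⟨k, hk⟩ : ∃ k, Nat.find hnil = k + 2 := by
      refine ⟨Nat.find hnil - 2, ?_⟩
      omega
    have hlcsm : S.lcs (k + 1) ≠ ⊥ := Nat.find_min hnil (by omega)
    have hlcss : S.lcs (k + 2) = ⊥ := hk ▸ hbot
    obtain ⟨c', hc'm, hc'ne⟩ := (Submodule.ne_bot_iff _).mp hlcsm
    have hc'c : c' ∈ S.center := by
      refine S.mem_center_of_br_left_zero fun y => ?_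
      have hmem : S.br c' y ∈ S.lcs (k + 2) :=
        Submodule.subset_span ⟨c', hc'm, y, rfl⟩
      rw [hlcss] at hmem
      simpa using hmem
    have hc'd : c' ∈ S.derived := S.lcs_succ_le_derived k hc'm
    obtain ⟨a, ha, b, hb, hab⟩ := S.derived_decomp 0 hc'd
    obtain ⟨hac, hbc⟩ := S.center_comp hc'c (Submodule.mem_inf.mp ha).2
      (Submodule.mem_inf.mp hb).2 hab
    have hcex : ∃ e : ZMod 2, ∃ c : L,
        c ≠ 0 ∧ c ∈ S.center ∧ c ∈ S.derived ∧ c ∈ S.grading e := by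
      by_cases ha0 : a = 0
      · refine ⟨0 + 1, b, ?_, hbc, (Submodule.mem_inf.mp hb).1, (Submodule.mem_inf.mp hb).2⟩
        intro hb0
        apply hc'ne
        rw [hab, ha0, hb0, add_zero]
      · exact ⟨0, a, ha0, hac, (Submodule.mem_inf.mp ha).1, (Submodule.mem_inf.mp ha).2⟩
    obtain ⟨e, c, hc0, hcc, hcd, hcg⟩ := hcex
    -- the subspace to kill with a functional
    set U := S.derived ⊔ S.grading (d + 1) with hU
    have hzU : z ∉ U := by
      intro hzU
      rcases Submodule.mem_sup.mp hzU with ⟨a', ha'd, b', hb'g, hab'⟩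
      rcases S.derived_decomp d ha'd with ⟨a0, ha0, a1, ha1, haa⟩
      have h1 : z - a0 ∈ S.grading d := sub_mem hzg (Submodule.mem_inf.mp ha0).2
      have h2 : -(a1 + b') ∈ S.grading (d + 1) :=
        neg_mem (add_mem (Submodule.mem_inf.mp ha1).2 hb'g)
      have h3 : (z - a0) + -(a1 + b') = 0 := by
        rw [← hab', haa]; abel
      have h4 := (S.add_eq_zero' h1 h2 h3).1
      exact hzd ((sub_eq_zero.mp h4) ▸ (Submodule.mem_inf.mp ha0).1)
    obtain ⟨f, hfz, hfU⟩ := Submodule.exists_dual_map_eq_bot_of_notMem hzU inferInstance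
    set g : L →ₗ[K] K := (f z)⁻¹ • f with hg
    have hgz : g z = 1 := by
      simp only [hg, LinearMap.smul_apply, smul_eq_mul]
      exact inv_mul_cancel₀ hfz
    have hgU : ∀ u ∈ U, g u = 0 := by
      intro u hu
      have : f u ∈ U.map f := Submodule.mem_map_of_mem hu
      rw [hfU] at this
      have hfu : f u = 0 := (Submodule.mem_bot K).mp this
      simp [hg, hfu]
    have hgd : ∀ u ∈ S.derived, g u = 0 := fun u hu => hgU u (Submodule.mem_sup_left hu)
    have hgg : ∀ u ∈ S.grading (d + 1), g u = 0 := fun u hu =>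
      hgU u (Submodule.mem_sup_right hu)
    -- the two central derivations
    have hT₂ : S.IsCentralDer 0 (g.smulRight z) := by
      refine ⟨⟨?_, ?_⟩, ?_⟩
      · intro i x hx
        rcases zmod2_cases i d with he | he
        · rw [he, add_zero]
          exact Submodule.smul_mem _ _ hzg
        · have hx0 : g x = 0 := hgg x (he ▸ hx)
          simp [LinearMap.smulRight_apply, hx0]
      · intro i x hx y
        have h1 : g (S.br x y) = 0 := hgd _ (br_mem_derived S x y)
        have h2 : S.br z y = 0 := S.center_br hzc y
        have h3 : S.br x z = 0 := hzc x
        simp [LinearMap.smulRight_apply, h1, h2, h3, map_smul]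
      · intro x
        exact Submodule.smul_mem _ _ hzc
    have hT₁ : S.IsCentralDer (e + d) (g.smulRight c) := by
      refine ⟨⟨?_, ?_⟩, ?_⟩
      · intro i x hx
        rcases zmod2_cases i d with he | he
        · rw [he, zmod2_add d e]
          exact Submodule.smul_mem _ _ hcg
        · have hx0 : g x = 0 := hgg x (he ▸ hx)
          simp [LinearMap.smulRight_apply, hx0]
      · intro i x hx y
        have h1 : g (S.br x y) = 0 := hgd _ (br_mem_derived S x y)
        have h2 : S.br c y = 0 := S.center_br hcc y
        have h3 : S.br x c = 0 := hcc x
        simp [LinearMap.smulRight_apply, h1, h2, h3, map_smul]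
      · intro x
        exact Submodule.smul_mem _ _ hcc
    -- derive the contradiction
    have heq := h (e + d) 0 _ _ hT₁ hT₂
    have hz' := LinearMap.congr_fun heq z
    have hgc : g c = 0 := hgd c hcd
    simp [sbr, LinearMap.sub_apply, LinearMap.comp_apply, LinearMap.smul_apply,
      LinearMap.smulRight_apply, hgz, hgc] at hz'
    exact hc0 hz'
  · intro hZ α β T₁ T₂ h1 h2
    ext x
    have e1 : T₁ (T₂ x) = 0 := S.cder_vanish h1 _ (hZ (h2.2 x))
    have e2 : T₂ (T₁ x) = 0 := S.cder_vanish h2 _ (hZ (h1.2 x))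
    simp [sbr, LinearMap.sub_apply, LinearMap.comp_apply, LinearMap.smul_apply, e1, e2]
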